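/- Let v > 0 and let P ≥ 0 be a random variable (the opposing price). If a bidder draws bid t with density f(t) = 1/(v - t) on [0, (1 - 1/e)v], independently of P, and obtains utility v - t when t > P and 0 otherwise, then the bidder's expected utility is at least (1 - 1/e)·v - E[P]. -/

import Mathlib

open Real MeasureTheory

theorem smoothness_deviation_lemma (v : ℝ) (hv : 0 < v)
    {Ω : Type*} [MeasurableSpace Ω] (μ : Measure Ω) [IsProbabilityMeasure μ]
    (P : Ω → ℝ) (hP0 : ∀ ω, 0 ≤ P ω) (hPint : Integrable P μ) :
    ∫ ω, (∫ t in Set.Ioo (0 : ℝ) ((1 - 1 / Real.exp 1) * v),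
        (if P ω < t then v - t else 0) * (1 / (v - t))) ∂μ ≥
      (1 - 1 / Real.exp 1) * v - ∫ ω, P ω ∂μ := by
  set c : ℝ := (1 - 1 / Real.exp 1) * v with hc
  have he : 0 < 1 / Real.exp 1 := by positivity
  have hcv : c < v := by nlinarith
  have key : ∀ p : ℝ, 0 ≤ p →
      (∫ t in Set.Ioo (0:ℝ) c, (if p < t then v - t else 0) * (1 / (v - t)))
        = max (c - p) 0 := by
    intro p hp
    have h1 : ∀ t ∈ Set.Ioo (0:ℝ) c,
        (if p < t then v - t else 0) * (1 / (v - t))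
          = Set.indicator (Set.Ioi p) (fun _ => (1:ℝ)) t := by
      intro t ht
      have hvt : v - t ≠ 0 := by have := ht.2; nlinarith
      by_cases h : p < t
      · rw [if_pos h, Set.indicator_of_mem (Set.mem_Ioi.mpr h)]
        field_simp
      · rw [if_neg h, Set.indicator_of_notMem (by simpa using h)]
        simp
    rw [setIntegral_congr_fun measurableSet_Ioo h1,
      setIntegral_indicator measurableSet_Ioi, setIntegral_const]
    have h2 : Set.Ioo 0 c ∩ Set.Ioi p = Set.Ioo p c := by
      ext x
      simp only [Set.mem_inter_iff, Set.mem_Ioo, Set.mem_Ioi]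
      constructor
      · rintro ⟨⟨_, h2⟩, h3⟩; exact ⟨h3, h2⟩
      · rintro ⟨h1, h2⟩; exact ⟨⟨lt_of_le_of_lt hp h1, h2⟩, h1⟩
    rw [h2, Real.volume_real_Ioo]
    simp [ENNReal.ofReal, Real.coe_toNNReal']
  have hstep : (∫ ω, (∫ t in Set.Ioo (0:ℝ) c,
      (if P ω < t then v - t else 0) * (1 / (v - t))) ∂μ)
      = ∫ ω, max (c - P ω) 0 ∂μ :=
    integral_congr_ae (Filter.Eventually.of_forall fun ω => key (P ω) (hP0 ω))
  rw [hstep]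
  have hint1 : Integrable (fun ω => c - P ω) μ := (integrable_const c).sub hPint
  have hint2 : Integrable (fun ω => max (c - P ω) 0) μ :=
    hint1.pos_part
  have hmono : (∫ ω, (c - P ω) ∂μ) ≤ ∫ ω, max (c - P ω) 0 ∂μ :=
    integral_mono hint1 hint2 fun ω => le_max_left _ _
  have heq : (∫ ω, (c - P ω) ∂μ) = c - ∫ ω, P ω ∂μ := by
    rw [integral_sub (integrable_const c) hPint, integral_const]
    simp
  linarith
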